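/- Define V₁ = A^⊤(X^⊤X)⁻¹A − (M̂^⊤M̂)⁻¹ and V₂ = (M̂^⊤M̂)⁻¹M̂^⊤SM̂(M̂^⊤M̂)⁻¹, and assume V₁ and V₂ are symmetric positive definite. Then for every γ > 0, the Loewner inequality γ·A^⊤(X^⊤X)⁻¹A ⪯ V₂ + γ·(M̂^⊤M̂)⁻¹ (i.e., the variance of the RTS estimate is dominated by the variance of the ATR estimate in the idealized source apportionment model) holds if and only if γ ≤ λ_min(V₁^{−1/2} V₂ V₁^{−1/2}), where V₁^{1/2} is the positive-definite square root of V₁ and λ_min denotes the smallest eigenvalue of a symmetric matrix; this λ_min equals the smallest eigenvalue of V₁⁻¹V₂. -/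

import Mathlib

open Matrix

/-- Congruence by an invertible hermitian (pos. def.) matrix preserves positive
semidefiniteness, in iff form. -/
lemma psd_conj_iff_aux {K : ℕ} {C R : Matrix (Fin K) (Fin K) ℝ} (hR : R.PosDef) :
    (R * C * R).PosSemidef ↔ C.PosSemidef := by
  letI := hR.isUnit.invertible
  constructor
  · intro h
    have h2 := h.mul_mul_conjTranspose_same R⁻¹
    rw [show R⁻¹ᴴ = R⁻¹ from hR.isHermitian.inv] at h2
    have hEq : R⁻¹ * (R * C * R) * R⁻¹ = C := by
      simp only [Matrix.mul_assoc, Matrix.mul_inv_of_invertible,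
        Matrix.inv_mul_of_invertible, Matrix.mul_one, Matrix.one_mul,
        Matrix.inv_mul_cancel_left_of_invertible]
    rwa [hEq] at h2
  · intro h
    have h2 := h.mul_mul_conjTranspose_same R
    rwa [show Rᴴ = R from hR.isHermitian] at h2

/-- A hermitian matrix shifted by `-γ` is PSD iff all eigenvalues are `≥ γ`. -/
lemma psd_shift_iff_aux {K : ℕ} {W : Matrix (Fin K) (Fin K) ℝ} (hW : W.IsHermitian)
    (γ : ℝ) : (W - γ • 1).PosSemidef ↔ ∀ i, γ ≤ hW.eigenvalues i := by
  set U : Matrix (Fin K) (Fin K) ℝ := (hW.eigenvectorUnitary : Matrix (Fin K) (Fin K) ℝ)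
  have hUU : U * star U = 1 := Matrix.mem_unitaryGroup_iff.mp hW.eigenvectorUnitary.2
  have hUU' : star U * U = 1 := Matrix.mem_unitaryGroup_iff'.mp hW.eigenvectorUnitary.2
  have hdiag : (diagonal (fun i => hW.eigenvalues i - γ) : Matrix (Fin K) (Fin K) ℝ)
      = diagonal (RCLike.ofReal ∘ hW.eigenvalues) - γ • 1 := by
    ext i j
    by_cases h : i = j
    · subst h; simp
    · simp [Matrix.diagonal_apply_ne _ h, Matrix.one_apply_ne h]
  have key : W - γ • 1 = U * diagonal (fun i => hW.eigenvalues i - γ) * star U := by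
    rw [hdiag, Matrix.mul_sub, Matrix.sub_mul, ← (show W = U * diagonal (RCLike.ofReal ∘ hW.eigenvalues) * star U from hW.spectral_theorem)]
    congr 1
    rw [Matrix.mul_smul, Matrix.smul_mul, Matrix.mul_one, hUU]
  constructor
  · intro h i
    have h2 := h.conjTranspose_mul_mul_same U
    rw [key, show Uᴴ = star U from rfl] at h2
    have hEq : star U * (U * diagonal (fun i => hW.eigenvalues i - γ) * star U) * U
        = diagonal (fun i => hW.eigenvalues i - γ) := by
      simp only [Matrix.mul_assoc]
      rw [hUU', Matrix.mul_one, ← Matrix.mul_assoc, hUU', Matrix.one_mul]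
    rw [hEq] at h2
    have := (Matrix.posSemidef_diagonal_iff.mp h2) i
    linarith
  · intro h
    rw [key]
    have h2 := (Matrix.posSemidef_diagonal_iff.mpr
      (fun i => by have := h i; linarith : ∀ i, (0:ℝ) ≤ hW.eigenvalues i - γ)).mul_mul_conjTranspose_same U
    rwa [show Uᴴ = star U from rfl] at h2

theorem stmt_6 (p n K : ℕ) (hK : 0 < K) (hKn : K ≤ n) (hnp : n < p)
    (X : Matrix (Fin p) (Fin n) ℝ) (A : Matrix (Fin n) (Fin K) ℝ)
    (hX : IsUnit (Xᵀ * X)) (hA : IsUnit (Aᵀ * A))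
    (M : Matrix (Fin p) (Fin K) ℝ) (hM : M = X * A * (Aᵀ * A)⁻¹)
    (S : Matrix (Fin p) (Fin p) ℝ)
    (hS : S = X * (1 - A * (Aᵀ * A)⁻¹ * Aᵀ) * Xᵀ)
    (V₁ V₂ : Matrix (Fin K) (Fin K) ℝ)
    (hV₁def : V₁ = Aᵀ * (Xᵀ * X)⁻¹ * A - (Mᵀ * M)⁻¹)
    (hV₂def : V₂ = (Mᵀ * M)⁻¹ * Mᵀ * S * M * (Mᵀ * M)⁻¹)
    (hV₁ : V₁.PosDef) (hV₂ : V₂.PosDef)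
    (R : Matrix (Fin K) (Fin K) ℝ) (hR : R.PosDef) (hRsq : R * R = V₁)
    (hW : (R⁻¹ * V₂ * R⁻¹).IsHermitian) :
    (∀ γ : ℝ, 0 < γ →
      ((V₂ + γ • (Mᵀ * M)⁻¹ - γ • (Aᵀ * (Xᵀ * X)⁻¹ * A)).PosSemidef ↔
        γ ≤ ⨅ i, hW.eigenvalues i)) ∧
    IsLeast (spectrum ℝ (V₁⁻¹ * V₂)) (⨅ i, hW.eigenvalues i) := by
  have hKne : Nonempty (Fin K) := Fin.pos_iff_nonempty.mp hK
  letI := hR.isUnit.invertible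
  have hdet : IsUnit R.det := (Matrix.isUnit_iff_isUnit_det R).mp hR.isUnit
  have hbdd : BddBelow (Set.range hW.eigenvalues) :=
    (Set.finite_range _).bddBelow
  constructor
  · intro γ hγ
    have hEq1 : V₂ + γ • (Mᵀ * M)⁻¹ - γ • (Aᵀ * (Xᵀ * X)⁻¹ * A) = V₂ - γ • V₁ := by
      rw [hV₁def, smul_sub]; abel
    have hEq2 : V₂ - γ • V₁ = R * ((R⁻¹ * V₂ * R⁻¹) - γ • 1) * R := by
      rw [Matrix.mul_sub, Matrix.sub_mul]
      congr 1
      · simp only [Matrix.mul_assoc, Matrix.mul_inv_of_invertible,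
          Matrix.inv_mul_of_invertible, Matrix.mul_one, Matrix.one_mul,
          Matrix.inv_mul_cancel_left_of_invertible, Matrix.mul_inv_cancel_left_of_invertible]
      · rw [Matrix.mul_smul, Matrix.smul_mul, Matrix.mul_one, hRsq]
    rw [hEq1, hEq2, psd_conj_iff_aux hR, psd_shift_iff_aux hW γ,
      ← le_ciInf_iff hbdd]
  · have hconj : V₁⁻¹ * V₂ = R⁻¹ * (R⁻¹ * V₂ * R⁻¹) * R := by
      have hV1inv : V₁⁻¹ = R⁻¹ * R⁻¹ := by rw [← hRsq, Matrix.mul_inv_rev]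
      rw [hV1inv]
      simp only [Matrix.mul_assoc]
      rw [Matrix.nonsing_inv_mul R hdet, Matrix.mul_one]
    obtain ⟨u, hu⟩ := hR.isUnit
    have hspec : spectrum ℝ (V₁⁻¹ * V₂) = Set.range hW.eigenvalues := by
      have h1 : V₁⁻¹ * V₂ = (↑u⁻¹ : Matrix (Fin K) (Fin K) ℝ) * (R⁻¹ * V₂ * R⁻¹) * (↑u : Matrix (Fin K) (Fin K) ℝ) := by
        rw [Matrix.coe_units_inv, hu, hconj]
      rw [h1, spectrum.units_conjugate', hW.spectrum_real_eq_range_eigenvalues]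
    rw [hspec]
    obtain ⟨i, hi⟩ := Finite.exists_min hW.eigenvalues
    have hinf : (⨅ j, hW.eigenvalues j) = hW.eigenvalues i :=
      le_antisymm (ciInf_le hbdd i) (le_ciInf hi)
    exact ⟨hinf ▸ ⟨i, rfl⟩, by rintro x ⟨j, rfl⟩; exact ciInf_le hbdd j⟩
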